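/- Let V and W be finite-dimensional vector spaces over a field k and φ : V → W a linear map. If D ⊆ W × W* is a maximal isotropic subspace, then the pullback φ⋆D := {(x, ξ ∘ φ) : x ∈ V, ξ ∈ W*, (φ(x), ξ) ∈ D} is a maximal isotropic subspace of V × V*. -/

import Mathlib

variable {k : Type*} [Field k] {V W : Type*} [AddCommGroup V] [Module k V]
  [AddCommGroup W] [Module k W]

/-- The canonical symmetric pairing on `V × V*`: `⟨(x, ξ), (y, η)⟩ = ξ(y) + η(x)`. -/
def pairVD (a b : V × Module.Dual k V) : k :=
  a.2 b.1 + b.2 a.1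

/-- The pullback `φ⋆D = {(x, ξ ∘ φ) : (φ x, ξ) ∈ D}` of a subset `D ⊆ W × W*` along a linear
map `φ : V → W`. -/
def pullDirac (φ : V →ₗ[k] W) (D : Set (W × Module.Dual k W)) :
    Set (V × Module.Dual k V) :=
  {p | ∃ ξ : Module.Dual k W, p.2 = φ.dualMap ξ ∧ (φ p.1, ξ) ∈ D}

/-- The canonical pairing as a bilinear form. -/
def diracForm (k : Type*) [Field k] (V : Type*) [AddCommGroup V] [Module k V] :
    LinearMap.BilinForm k (V × Module.Dual k V) :=
  LinearMap.mk₂ k (fun a b => a.2 b.1 + b.2 a.1)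
    (by intros; simp; try ring) (by intros; simp [mul_add]; try ring)
    (by intros; simp; try ring) (by intros; simp [mul_add]; try ring)

lemma diracForm_apply (a b : V × Module.Dual k V) :
    diracForm k V a b = pairVD a b := rfl

lemma diracForm_symm (a b : V × Module.Dual k V) :
    diracForm k V a b = diracForm k V b a := by
  simp [diracForm_apply, pairVD, add_comm]

lemma diracForm_isRefl : (diracForm k V).IsRefl := by
  intro a b h; rwa [diracForm_symm]

lemma diracForm_nondegenerate : (diracForm k V).Nondegenerate := by
  have hL : (diracForm k V).SeparatingLeft := by
    intro a ha
    obtain ⟨x, ξ⟩ := a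
    have hξ : ξ = 0 := by
      ext y
      simpa [diracForm_apply, pairVD] using ha (y, 0)
    have hx : x = 0 := by
      rw [← Module.forall_dual_apply_eq_zero_iff k x]
      intro η
      simpa [diracForm_apply, pairVD] using ha (0, η)
    simp [hx, hξ]
  exact ⟨hL, fun a ha => hL a (fun b => by rw [diracForm_symm]; exact ha b)⟩

/-- The pullback of a maximal isotropic subspace `D ⊆ W × W*` along a linear
map `φ : V → W` is a maximal isotropic subspace of `V × V*` (i.e. it equals its own
orthogonal for the canonical pairing). -/
theorem pullDirac_maximal_isotropic [FiniteDimensional k V] [FiniteDimensional k W]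
    (φ : V →ₗ[k] W) (D : Submodule k (W × Module.Dual k W))
    (hmax : ∀ a : W × Module.Dual k W, a ∈ D ↔ ∀ b ∈ D, pairVD a b = 0) :
    ∀ a : V × Module.Dual k V,
      a ∈ pullDirac φ (D : Set (W × Module.Dual k W)) ↔
        ∀ b ∈ pullDirac φ (D : Set (W × Module.Dual k W)), pairVD a b = 0 := by
  classical
  set Bw := diracForm k W with hBwdef
  -- D equals its own orthogonal
  have hDorth : Bw.orthogonal D = D := by
    ext a
    rw [LinearMap.BilinForm.mem_orthogonal_iff, hmax a]
    constructor
    · intro h b hb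
      have h0 : pairVD b a = 0 := h b hb
      rw [pairVD] at h0 ⊢
      rw [add_comm]; exact h0
    · intro h b hb
      have h0 := h b hb
      show pairVD b a = 0
      rw [pairVD] at h0 ⊢
      rw [add_comm]; exact h0
  set U : Submodule k W := LinearMap.range φ with hU
  set N : Submodule k (W × Module.Dual k W) :=
    Submodule.prod ⊥ U.dualAnnihilator with hN
  -- the orthogonal of N
  have hNorth : Bw.orthogonal N = U.prod ⊤ := by
    ext b
    simp only [LinearMap.BilinForm.mem_orthogonal_iff, Submodule.mem_prod,
      Submodule.mem_top, and_true]
    constructor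
    · intro hb
      rw [← Subspace.forall_mem_dualAnnihilator_apply_eq_zero_iff U]
      intro μ hμ
      have h0 : pairVD (0, μ) b = 0 := hb (0, μ) (by simp [hN, Submodule.mem_prod, hμ])
      simpa [pairVD] using h0
    · intro hb n hn
      rw [hN, Submodule.mem_prod] at hn
      have h1 : n.1 = 0 := by simpa using hn.1
      have h2 : n.2 b.1 = 0 := (Submodule.mem_dualAnnihilator _).mp hn.2 b.1 hb
      show pairVD n b = 0
      simp [pairVD, h1, h2]
  -- orthogonal of a sup is the inf of orthogonals
  have hsup : Bw.orthogonal (D ⊔ N) = Bw.orthogonal D ⊓ Bw.orthogonal N := by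
    ext a
    simp only [Submodule.mem_inf, LinearMap.BilinForm.mem_orthogonal_iff]
    constructor
    · intro h
      exact ⟨fun n hn => h n (Submodule.mem_sup_left hn),
        fun n hn => h n (Submodule.mem_sup_right hn)⟩
    · rintro ⟨h1, h2⟩ n hn
      obtain ⟨d, hd, m, hm, rfl⟩ := Submodule.mem_sup.mp hn
      show Bw (d + m) a = 0
      rw [map_add, LinearMap.add_apply, show Bw d a = 0 from h1 d hd,
        show Bw m a = 0 from h2 m hm, add_zero]
  intro a
  constructor
  · -- pullback is isotropic
    rintro ⟨ξ, hξ, hD⟩ b ⟨η, hη, hbD⟩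
    have := (hmax (φ a.1, ξ)).1 hD (φ b.1, η) hbD
    simp only [pairVD] at this ⊢
    simpa [hξ, hη] using this
  · rintro h
    obtain ⟨x, α⟩ := a
    -- α kills ker φ, hence α = φ* ξ₀
    have hαker : α ∈ (LinearMap.ker φ).dualAnnihilator := by
      rw [Submodule.mem_dualAnnihilator]
      intro y hy
      have hb : ((y, 0) : V × Module.Dual k V) ∈
          pullDirac φ (D : Set (W × Module.Dual k W)) := by
        refine ⟨0, by simp, ?_⟩
        simp only [LinearMap.mem_ker] at hy
        simp only [hy]; exact D.zero_mem
      simpa [pairVD] using h (y, 0) hb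
    rw [← LinearMap.range_dualMap_eq_dualAnnihilator_ker] at hαker
    obtain ⟨ξ₀, hξ₀⟩ := hαker
    set c : W × Module.Dual k W := (φ x, ξ₀) with hc
    -- c is orthogonal to orthogonal (D ⊔ N)
    have hcmem : c ∈ Bw.orthogonal (Bw.orthogonal (D ⊔ N)) := by
      rw [LinearMap.BilinForm.mem_orthogonal_iff]
      intro m hm
      rw [hsup, hDorth, hNorth, Submodule.mem_inf] at hm
      obtain ⟨hmD, hmU⟩ := hm
      rw [Submodule.mem_prod] at hmU
      obtain ⟨y, hy⟩ := hmU.1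
      have hb : ((y, φ.dualMap m.2) : V × Module.Dual k V) ∈
          pullDirac φ (D : Set (W × Module.Dual k W)) := by
        refine ⟨m.2, rfl, ?_⟩
        rw [hy]
        simpa using hmD
      have hpair := h (y, φ.dualMap m.2) hb
      simp only [pairVD, LinearMap.dualMap_apply'] at hpair
      show pairVD m c = 0
      have hαy : ξ₀ (φ y) = α y := by rw [← hξ₀]; rfl
      simp only [pairVD, hc, ← hy]
      rw [hαy]
      rw [LinearMap.coe_comp, Function.comp_apply] at hpair
      linear_combination hpair
    rw [LinearMap.BilinForm.orthogonal_orthogonal diracForm_nondegenerate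
      diracForm_isRefl] at hcmem
    obtain ⟨d, hd, n, hn, hdn⟩ := Submodule.mem_sup.mp hcmem
    rw [hN, Submodule.mem_prod] at hn
    have hn1 : n.1 = 0 := by simpa using hn.1
    refine ⟨ξ₀ - n.2, ?_, ?_⟩
    · -- α = φ* (ξ₀ - n.2)
      ext y
      have : n.2 (φ y) = 0 :=
        (Submodule.mem_dualAnnihilator _).mp hn.2 (φ y) ⟨y, rfl⟩
      simp only [LinearMap.dualMap_apply', LinearMap.coe_comp, Function.comp_apply,
        LinearMap.sub_apply, this, sub_zero]
      rw [← hξ₀]; rfl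
    · -- (φ x, ξ₀ - n.2) ∈ D
      have : ((φ x, ξ₀ - n.2) : W × Module.Dual k W) = d := by
        have h1 : d.1 = φ x - n.1 := by
          have := congrArg Prod.fst hdn
          simp only [Prod.fst_add, hc] at this
          exact eq_sub_of_add_eq this
        have h2 : d.2 = ξ₀ - n.2 := by
          have := congrArg Prod.snd hdn
          simp only [Prod.snd_add, hc] at this
          exact eq_sub_of_add_eq this
        rw [hn1, sub_zero] at h1
        exact Prod.ext h1.symm h2.symm
      rw [this]
      exact hd
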